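/- Every cubic field K contains an element α ∈ O_K \ ℤ with trace in {-1, 0, 1} and with all archimedean absolute values at most C·|Δ(K)|^{1/4}, for some absolute constant C. -/

import Mathlib

open scoped NNReal ENNReal
open NumberField NumberField.InfinitePlace NumberField.mixedEmbedding MeasureTheory Module

lemma aux1 (K : Type) [Field K] [NumberField K] (h3 : finrank ℚ K = 3) :
    ∃ a : 𝓞 K, (∀ m : ℤ, a ≠ algebraMap ℤ (𝓞 K) m) ∧
      ∀ w : InfinitePlace K, w (algebraMap (𝓞 K) K a) ≤ 3 * |(discr K : ℝ)| ^ ((1:ℝ)/4) := by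
  classical
  have hcard : nrRealPlaces K + 2 * nrComplexPlaces K = 3 := by
    rw [card_add_two_mul_card_eq_rank, h3]
  have hr : 0 < nrRealPlaces K := by omega
  obtain ⟨w₀⟩ : Nonempty {w : InfinitePlace K // IsReal w} := Fintype.card_pos_iff.mp hr
  set S : ℝ≥0 := NNReal.sqrt ‖discr K‖₊ with hSdef
  set D : ℝ≥0 := 3 * NNReal.sqrt S with hDdef
  set f : InfinitePlace K → ℝ≥0 := fun w => if w = w₀.1 then 2⁻¹ else D with hf
  have hS0 : S ≠ 0 := by
    refine ne_of_gt (NNReal.sqrt_pos.mpr ?_)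
    simpa using discr_ne_zero K
  have hmult : mult w₀.1 = 1 := by simp [mult, w₀.2]
  have hfw₀ : f w₀.1 = 2⁻¹ := by simp [hf]
  -- the product of f
  have hprod : ∏ w : InfinitePlace K, f w ^ mult w = 2⁻¹ * (9 * S) := by
    rw [← Finset.mul_prod_erase Finset.univ _ (Finset.mem_univ w₀.1)]
    have h1 : f w₀.1 ^ mult w₀.1 = 2⁻¹ := by rw [hfw₀, hmult, pow_one]
    have h2 : ∏ w ∈ Finset.univ.erase w₀.1, f w ^ mult w =
        ∏ w ∈ Finset.univ.erase w₀.1, D ^ mult w := by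
      refine Finset.prod_congr rfl fun w hw => ?_
      simp [hf, Finset.ne_of_mem_erase hw]
    have h3' : ∑ w ∈ Finset.univ.erase w₀.1, mult w = 2 := by
      have hsm := sum_mult_eq (K := K)
      rw [h3, ← Finset.add_sum_erase Finset.univ _ (Finset.mem_univ w₀.1), hmult] at hsm
      omega
    have hD2 : D ^ 2 = 9 * S := by
      rw [hDdef, mul_pow, NNReal.sq_sqrt]
      norm_num
    rw [h1, h2, Finset.prod_pow_eq_pow_sum, h3', hD2]
  have hvol : minkowskiBound K 1 < volume (convexBodyLT K f) := by
    have hMB : minkowskiBound K 1 ≤ 8 * (S : ℝ≥0∞) := by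
      rw [minkowskiBound, volume_fundamentalDomain_fractionalIdealLatticeBasis,
        volume_fundamentalDomain_latticeBasis, mixedEmbedding.finrank, h3]
      simp only [Units.val_one, FractionalIdeal.absNorm_one, Rat.cast_one, ENNReal.ofReal_one,
        one_mul, ← hSdef]
      calc (2 : ℝ≥0∞)⁻¹ ^ nrComplexPlaces K * (S : ℝ≥0∞) * 2 ^ 3
          ≤ 1 * (S : ℝ≥0∞) * 2 ^ 3 := by
            gcongr
            exact pow_le_one₀ (by norm_num) (by norm_num)
        _ = 8 * (S : ℝ≥0∞) := by rw [one_mul, mul_comm]; norm_num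
    refine lt_of_le_of_lt hMB ?_
    rw [convexBodyLT_volume, hprod]
    have hfac : (2 : ℝ≥0∞) ≤ (convexBodyLTFactor K : ℝ≥0∞) := by
      have hp : (1:ℝ≥0) ≤ NNReal.pi := by
        rw [← NNReal.coe_le_coe, NNReal.coe_one, NNReal.coe_real_pi]
        linarith [Real.pi_gt_three]
      have h2f : (2:ℝ≥0) ≤ convexBodyLTFactor K := by
        calc (2:ℝ≥0) = 2 ^ 1 * 1 := by norm_num
          _ ≤ 2 ^ nrRealPlaces K * NNReal.pi ^ nrComplexPlaces K :=
              mul_le_mul (pow_le_pow_right₀ one_le_two hr) (one_le_pow₀ hp)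
                zero_le_one (by positivity)
      exact_mod_cast h2f
    calc (8 : ℝ≥0∞) * (S : ℝ≥0∞) < 9 * (S : ℝ≥0∞) := by
          refine (ENNReal.mul_lt_mul_iff_left ?_ ?_).mpr (by norm_num)
          · exact_mod_cast hS0
          · exact ENNReal.coe_ne_top
      _ = 2 * ((2⁻¹ * (9 * S) : ℝ≥0) : ℝ≥0∞) := by
          push_cast
          rw [← mul_assoc, ← mul_assoc, ENNReal.mul_inv_cancel (by norm_num) (by norm_num), one_mul]
      _ ≤ (convexBodyLTFactor K : ℝ≥0∞) * ((2⁻¹ * (9 * S) : ℝ≥0) : ℝ≥0∞) := by gcongr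
  obtain ⟨a, ha0, haw⟩ := exists_ne_zero_mem_ringOfIntegers_lt K hvol
  -- basic facts about the discriminant size
  have hΔ1 : (1:ℝ) ≤ |(discr K : ℝ)| := by
    have h1 : (1:ℤ) ≤ |discr K| := Int.one_le_abs (discr_ne_zero K)
    calc (1:ℝ) = ((1:ℤ):ℝ) := by norm_num
      _ ≤ ((|discr K| : ℤ) : ℝ) := by exact_mod_cast h1
      _ = |(discr K : ℝ)| := by push_cast; ring
  have hone : (1:ℝ) ≤ |(discr K : ℝ)| ^ ((1:ℝ)/4) := by
    calc (1:ℝ) = 1 ^ ((1:ℝ)/4) := (Real.one_rpow _).symm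
      _ ≤ |(discr K : ℝ)| ^ ((1:ℝ)/4) := Real.rpow_le_rpow (by norm_num) hΔ1 (by norm_num)
  have hDR : (D : ℝ) = 3 * |(discr K : ℝ)| ^ ((1:ℝ)/4) := by
    rw [hDdef, hSdef]
    push_cast
    rw [Int.norm_eq_abs, Real.sqrt_eq_rpow, Real.sqrt_eq_rpow,
      ← Real.rpow_mul (abs_nonneg _)]
    norm_num
  refine ⟨a, ?_, ?_⟩
  · intro m hm
    have hm0 : m ≠ 0 := by
      rintro rfl
      simp only [map_zero] at hm
      exact ha0 hm
    have h1 : w₀.1 (algebraMap (𝓞 K) K a) < (f w₀.1 : ℝ) := haw w₀.1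
    have h2 : w₀.1 (algebraMap (𝓞 K) K a) = |(m:ℝ)| := by
      rw [hm]
      have hc : (algebraMap (𝓞 K) K) ((algebraMap ℤ (𝓞 K)) m) = ((m : ℤ) : K) := by
        simp
      rw [hc, ← norm_embedding_eq, map_intCast, Complex.norm_intCast]
    have h3' : (1:ℝ) ≤ |(m:ℝ)| := by
      have him := Int.one_le_abs hm0
      calc (1:ℝ) = ((1:ℤ):ℝ) := by norm_num
        _ ≤ ((|m| : ℤ) : ℝ) := by exact_mod_cast him
        _ = |(m:ℝ)| := by push_cast; ring
    rw [h2, hfw₀] at h1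
    norm_num at h1
    linarith
  · intro w
    refine le_trans (le_of_lt (haw w)) ?_
    have hfD : (f w : ℝ) ≤ (D : ℝ) := by
      by_cases hw : w = w₀.1
      · rw [hw, hfw₀, hDR]
        norm_num
        linarith
      · simp [hf, hw]
    calc (f w : ℝ) ≤ (D : ℝ) := hfD
      _ = 3 * |(discr K : ℝ)| ^ ((1:ℝ)/4) := hDR

open Polynomial

lemma auxtr (K : Type) [Field K] [NumberField K] (b : 𝓞 K) :
    ((Algebra.trace ℤ (𝓞 K) b : ℤ) : ℚ) = Algebra.trace ℚ K (algebraMap (𝓞 K) K b) := by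
  rw [← Algebra.intTrace_eq_trace]
  have h := Algebra.algebraMap_intTrace (A := ℤ) (K := ℚ) (L := K) (B := 𝓞 K) b
  rw [← h, eq_intCast]

theorem stmt11 : ∃ C : ℝ, 0 < C ∧
    ∀ (K : Type) (_ : Field K) (_ : NumberField K),
      Module.finrank ℚ K = 3 →
      ∃ α : 𝓞 K,
        α ∉ Set.range (algebraMap ℤ (𝓞 K)) ∧
        Algebra.trace ℤ (𝓞 K) α ∈ ({-1, 0, 1} : Set ℤ) ∧
        ∀ φ : K →+* ℂ,
          ‖φ (algebraMap (𝓞 K) K α)‖ ≤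
            C * |(NumberField.discr K : ℝ)| ^ ((1 : ℝ)/4) := by
  refine ⟨7, by norm_num, fun K _ _ h3 => ?_⟩
  obtain ⟨a, hanot, habd⟩ := aux1 K h3
  set R : ℝ := |(discr K : ℝ)| ^ ((1:ℝ)/4) with hR
  have hone : (1:ℝ) ≤ R := by
    have hΔ1 : (1:ℝ) ≤ |(discr K : ℝ)| := by
      have h1 : (1:ℤ) ≤ |discr K| := Int.one_le_abs (discr_ne_zero K)
      calc (1:ℝ) = ((1:ℤ):ℝ) := by norm_num
        _ ≤ ((|discr K| : ℤ) : ℝ) := by exact_mod_cast h1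
        _ = |(discr K : ℝ)| := by push_cast; ring
    calc (1:ℝ) = 1 ^ ((1:ℝ)/4) := (Real.one_rpow _).symm
      _ ≤ R := Real.rpow_le_rpow (by norm_num) hΔ1 (by norm_num)
  set t : ℤ := Algebra.trace ℤ (𝓞 K) a with ht
  -- bound on embeddings of a
  have hemb : ∀ φ : K →+* ℂ, ‖φ (algebraMap (𝓞 K) K a)‖ ≤ 3 * R := by
    intro φ
    have h := habd (NumberField.InfinitePlace.mk φ)
    rwa [NumberField.InfinitePlace.apply] at h
  -- bound on the trace
  have htb : |(t:ℝ)| ≤ 9 * R := by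
    have hsum : ((t:ℚ):ℂ) = ∑ σ : K →ₐ[ℚ] ℂ, σ (algebraMap (𝓞 K) K a) := by
      have h1 := trace_eq_sum_embeddings (K := ℚ) (L := K) ℂ (x := algebraMap (𝓞 K) K a)
      rw [← h1, auxtr, eq_ratCast]
    have hcardAH : Fintype.card (K →ₐ[ℚ] ℂ) = 3 := by rw [AlgHom.card, h3]
    have hn : ‖((t:ℚ):ℂ)‖ ≤ 3 * (3 * R) := by
      rw [hsum]
      refine le_trans (norm_sum_le _ _) ?_
      calc ∑ σ : K →ₐ[ℚ] ℂ, ‖σ (algebraMap (𝓞 K) K a)‖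
          ≤ ∑ _σ : K →ₐ[ℚ] ℂ, 3 * R :=
            Finset.sum_le_sum (fun σ _ => hemb (σ : K →+* ℂ))
        _ = 3 * (3 * R) := by
            rw [Finset.sum_const, Finset.card_univ, hcardAH]
            set_option linter.unusedTactic false in
            push_cast
            ring
    rw [Complex.norm_ratCast] at hn
    push_cast at hn
    linarith
  -- the integer to subtract
  set q : ℤ := round ((t:ℚ)/3) with hq
  have hround := abs_sub_round ((t:ℚ)/3)
  set α : 𝓞 K := a - algebraMap ℤ (𝓞 K) q with hα
  have htrα : Algebra.trace ℤ (𝓞 K) α = t - 3 * q := by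
    rw [hα, map_sub, ← ht, Algebra.trace_algebraMap, NumberField.RingOfIntegers.rank, h3]
    simp [mul_comm]
  have h1 : |(t:ℚ) - 3 * q| ≤ 3/2 := by
    have h2 : (t:ℚ) - 3 * q = 3 * ((t:ℚ)/3 - q) := by ring
    rw [h2, abs_mul]
    rw [abs_of_nonneg (by norm_num : (0:ℚ) ≤ 3)]
    linarith
  have hIb : |t - 3 * q| ≤ 1 := by
    have h3' : |((t - 3*q : ℤ) : ℚ)| < 2 := by
      push_cast
      calc |(t:ℚ) - 3*q| ≤ 3/2 := h1
        _ < 2 := by norm_num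
    rw [← Int.cast_abs] at h3'
    have h4' : |t - 3*q| < 2 := by exact_mod_cast h3'
    omega
  refine ⟨α, ?_, ?_, ?_⟩
  · rintro ⟨m, hm⟩
    refine hanot (m + q) ?_
    rw [map_add, hm, hα]
    ring
  · rw [htrα]
    obtain ⟨hl, hr⟩ := abs_le.mp hIb
    simp only [Set.mem_insert_iff, Set.mem_singleton_iff]
    omega
  · intro φ
    have hsplit : φ (algebraMap (𝓞 K) K α) =
        φ (algebraMap (𝓞 K) K a) - ((q:ℤ):ℂ) := by
      rw [hα, map_sub, map_sub]
      congr 1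
      have hc : (algebraMap (𝓞 K) K) ((algebraMap ℤ (𝓞 K)) q) = ((q : ℤ) : K) := by simp
      rw [hc, map_intCast]
    have hqb : |(q:ℝ)| ≤ 3 * R + 1/2 := by
      have h1r : |(t:ℝ) - 3*(q:ℝ)| ≤ 1 := by exact_mod_cast hIb
      obtain ⟨hl1, hr1⟩ := abs_le.mp h1r
      obtain ⟨hl2, hr2⟩ := abs_le.mp htb
      refine abs_le.mpr ⟨by linarith, by linarith⟩
    calc ‖φ (algebraMap (𝓞 K) K α)‖
        ≤ ‖φ (algebraMap (𝓞 K) K a)‖ + ‖((q:ℤ):ℂ)‖ := by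
          rw [hsplit]
          exact norm_sub_le _ _
      _ ≤ 3 * R + (3 * R + 1/2) := by
          refine add_le_add (hemb φ) ?_
          rw [Complex.norm_intCast]
          exact hqb
      _ ≤ 7 * R := by linarith
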